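/- Let G be a finite simple graph without isolated vertices, and let e⁺ be the bijection between decorations of the trimming T(G) and decorations of the induced subgraph G′ of G (viewed as decorations of G) induced by the subscript-dropping homomorphism e. Then e⁺ restricts to a bijection from the set of states of T(G) to the set of dormant states of G; moreover this bijection respects inclusion of states and the follower relation: for states X, X′ of T(G), X′ is a follower of X in T(G) if and only if e⁺(X′) is a dormant follower of e⁺(X) in G. Consequently, the Trimmed Game of Arrows on T(G) is equivalent to the Game of Arrows on G (the game trees from corresponding positions are isomorphic). -/

import Mathlib

/-- A decoration of a graph `G`: a set of arrows drawn on edges of `G`,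
at most one per edge. -/
def IsDecoration {V : Type*} (G : SimpleGraph V) (X : Set (V × V)) : Prop :=
  (∀ p ∈ X, G.Adj p.1 p.2) ∧ (∀ p ∈ X, Prod.swap p ∉ X)

/-- `w` is a sink of the decoration `X`. -/
def IsSink {V : Type*} (G : SimpleGraph V) (X : Set (V × V)) (w : V) : Prop :=
  ∀ v, G.Adj v w → (v, w) ∈ X

/-- `v` is a source of the decoration `X`. -/
def IsSource {V : Type*} (G : SimpleGraph V) (X : Set (V × V)) (v : V) : Prop :=
  ∀ w, G.Adj v w → (v, w) ∈ X

/-- A leaf is a vertex of degree one. -/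
def IsLeaf {V : Type*} (G : SimpleGraph V) (v : V) : Prop :=
  ∃! w, G.Adj v w

/-- A state: a decoration with no sinks or sources at internal (non-leaf) vertices. -/
def IsState {V : Type*} (G : SimpleGraph V) (X : Set (V × V)) : Prop :=
  IsDecoration G X ∧ ∀ v, ¬ IsLeaf G v → ¬ IsSink G X v ∧ ¬ IsSource G X v

/-- `X'` is a follower of the state `X`: a state obtained from `X` by adding one arrow. -/
def Follower {V : Type*} (G : SimpleGraph V) (X X' : Set (V × V)) : Prop :=
  IsState G X ∧ IsState G X' ∧ ∃ p, p ∉ X ∧ X' = insert p X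

/-- `X'` is a descendent of `X`: obtained from `X` by one or more follower steps. -/
def Descendent {V : Type*} (G : SimpleGraph V) (X X' : Set (V × V)) : Prop :=
  Relation.TransGen (Follower G) X X'

/-- `p` is an arrow of the subgraph `U(X)` of `G` induced by the edges unmarked in `X`. -/
def UnmarkedArrow {V : Type*} (G : SimpleGraph V) (X : Set (V × V)) (p : V × V) : Prop :=
  G.Adj p.1 p.2 ∧ p ∉ X ∧ Prod.swap p ∉ X

/-- `v` is a vertex of the subgraph `U(X)` of `G` induced by the unmarked edges of `X`. -/
def UnmarkedVert {V : Type*} (G : SimpleGraph V) (X : Set (V × V)) (v : V) : Prop :=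
  ∃ w, UnmarkedArrow G X (v, w)

/-- The map `a⁺` on decorations containing `X` induced by the arrow map `a`:
`a⁺(X*) = Y ∪ a(X* \ X)`. -/
def aPlus {V W : Type*} (a : V × V → W × W) (X : Set (V × V)) (Y : Set (W × W))
    (X' : Set (V × V)) : Set (W × W) :=
  Y ∪ a '' (X' \ X)

/-- A state isomorphism from a state `X` of `G` to a state `Y` of `H`: a bijection `a`
from the arrows of `U(X)` to the arrows of `U(Y)` commuting with the flip operation,
such that the induced map `a⁺` on decorations restricts to a bijection from the
descendents of `X` to the descendents of `Y`. -/
def IsStateIso {V W : Type*} (G : SimpleGraph V) (H : SimpleGraph W)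
    (X : Set (V × V)) (Y : Set (W × W)) (a : V × V → W × W) : Prop :=
  Set.BijOn a {p | UnmarkedArrow G X p} {q | UnmarkedArrow H Y q} ∧
  (∀ p, UnmarkedArrow G X p → a (Prod.swap p) = Prod.swap (a p)) ∧
  Set.BijOn (aPlus a X Y) {X' | Descendent G X X'} {Y' | Descendent H Y Y'}

/-- A dormant state: a state with no sinks or sources at any vertex
(leaves included). -/
def IsDormant {V : Type*} (G : SimpleGraph V) (X : Set (V × V)) : Prop :=
  IsState G X ∧ ∀ v, ¬ IsSink G X v ∧ ¬ IsSource G X v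

/-- `X'` is a dormant follower of the dormant state `X`: a dormant state obtained
from `X` by adding one arrow. -/
def DormantFollower {V : Type*} (G : SimpleGraph V) (X X' : Set (V × V)) : Prop :=
  IsDormant G X ∧ IsDormant G X' ∧ ∃ p, p ∉ X ∧ X' = insert p X

/-- Vertex set of the ramification `R_K(Γ)` of a graph `Γ` at a set `K` of vertices:
the vertices of `Γ` not in `K`, together with a vertex `a_x` for each `a ∈ K` and
each neighbor `x` of `a` (encoded as the pair `(a, x)`). -/
abbrev RamV {U : Type*} (Γ : SimpleGraph U) (K : Set U) : Type _ :=
  {v : U // v ∉ K} ⊕ {p : U × U // p.1 ∈ K ∧ Γ.Adj p.1 p.2}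

/-- The ramification `R_K(Γ)` of `Γ` at `K`: its edges are the edges of `Γ - K`,
the edges `{a_x, x}` for `a ∈ K`, `x ∉ K`, `{a,x} ∈ E(Γ)`, and the edges
`{a_b, b_a}` for `a, b ∈ K`, `{a,b} ∈ E(Γ)`. -/
def Ramification {U : Type*} (Γ : SimpleGraph U) (K : Set U) :
    SimpleGraph (RamV Γ K) :=
  SimpleGraph.fromRel (fun v w =>
    match v, w with
    | Sum.inl x, Sum.inl y => Γ.Adj x.val y.val
    | Sum.inr a, Sum.inl x => a.val.2 = x.val
    | Sum.inl x, Sum.inr a => a.val.2 = x.val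
    | Sum.inr a, Sum.inr b => a.val.2 = b.val.1 ∧ b.val.2 = a.val.1 ∧ a.val.2 ∈ K)

/-- The subgraph `G′` of `G` induced by the internal (non-leaf) vertices of `G`. -/
def Gprime {V : Type*} (G : SimpleGraph V) : SimpleGraph ↥{v : V | ¬ IsLeaf G v} :=
  SimpleGraph.induce {v : V | ¬ IsLeaf G v} G

/-- The set `K` of internal vertices of `G` that are adjacent to a leaf of `G`,
as a subset of the vertices of `G′`. -/
def trimK {V : Type*} (G : SimpleGraph V) : Set ↥{v : V | ¬ IsLeaf G v} :=
  {v | ∃ l, IsLeaf G l ∧ G.Adj v.val l}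

/-- The vertex type of the trimming `T(G)`. -/
abbrev TrimV {V : Type*} (G : SimpleGraph V) : Type _ := RamV (Gprime G) (trimK G)

/-- The trimming `T(G) = R_K(G′)` of `G`. -/
def Trimming {V : Type*} (G : SimpleGraph V) : SimpleGraph (TrimV G) :=
  Ramification (Gprime G) (trimK G)

/-- The subscript-dropping map `e` on vertices, from `T(G)` to (the internal
vertices of) `G`. -/
def trimDrop {V : Type*} (G : SimpleGraph V) : TrimV G → V
  | Sum.inl x => x.val.val
  | Sum.inr a => a.val.1.val

/-- The map `e⁺` induced by `e`, from decorations of `T(G)` to decorations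
of `G′` viewed as decorations of `G`. -/
def ePlus {V : Type*} (G : SimpleGraph V) (X : Set (TrimV G × TrimV G)) :
    Set (V × V) :=
  (fun p => (trimDrop G p.1, trimDrop G p.2)) '' X

section TrimmingLemmas

variable {V : Type*} {G : SimpleGraph V}

private lemma gprime_adj {x y : ↥{v : V | ¬ IsLeaf G v}} :
    (Gprime G).Adj x y ↔ G.Adj x.val y.val := Iff.rfl

private lemma drop_internal (u : TrimV G) : ¬ IsLeaf G (trimDrop G u) := by
  cases u with
  | inl x => exact x.val.property
  | inr a => exact a.val.1.property

private lemma trim_adj {u w : TrimV G} (h : (Trimming G).Adj u w) :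
    G.Adj (trimDrop G u) (trimDrop G w) := by
  rw [Trimming, Ramification, SimpleGraph.fromRel_adj] at h
  cases u with
  | inl x =>
    cases w with
    | inl y =>
      rcases h.2 with h' | h'
      · exact h'
      · exact h'.symm
    | inr a =>
      have h' : a.val.2 = x.val := h.2.elim id id
      have ha : G.Adj a.val.1.val a.val.2.val := a.property.2
      rw [h'] at ha
      exact ha.symm
  | inr a =>
    cases w with
    | inl y =>
      have h' : a.val.2 = y.val := h.2.elim id id
      have ha : G.Adj a.val.1.val a.val.2.val := a.property.2
      rw [h'] at ha
      exact ha
    | inr b =>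
      have h' : a.val.2 = b.val.1 := h.2.elim (fun h => h.1) (fun h => h.2.1)
      have ha : G.Adj a.val.1.val a.val.2.val := a.property.2
      rw [h'] at ha
      exact ha

private lemma nbr_drop {a} {w : TrimV G} (h : (Trimming G).Adj (Sum.inr a) w) :
    trimDrop G w = a.val.2.val := by
  rw [Trimming, Ramification, SimpleGraph.fromRel_adj] at h
  cases w with
  | inl y =>
    have h' : a.val.2 = y.val := h.2.elim id id
    exact (congrArg Subtype.val h').symm
  | inr b =>
    have h' : a.val.2 = b.val.1 := h.2.elim (fun h => h.1) (fun h => h.2.1)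
    exact (congrArg Subtype.val h').symm

private lemma drop_inj {u w u' w' : TrimV G} (h : (Trimming G).Adj u w)
    (h' : (Trimming G).Adj u' w') (h1 : trimDrop G u = trimDrop G u')
    (h2 : trimDrop G w = trimDrop G w') : u = u' := by
  cases u with
  | inl x =>
    cases u' with
    | inl x' => exact congrArg Sum.inl (Subtype.ext (Subtype.ext h1))
    | inr a' =>
      exfalso
      have : x.val = a'.val.1 := Subtype.ext h1
      exact x.property (this ▸ a'.property.1)
  | inr a =>
    cases u' with
    | inl x' =>
      exfalso
      have : x'.val = a.val.1 := Subtype.ext h1.symm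
      exact x'.property (this ▸ a.property.1)
    | inr a' =>
      have e1 : a.val.1 = a'.val.1 := Subtype.ext h1
      have e2 : a.val.2 = a'.val.2 := by
        have := (nbr_drop h).symm.trans (h2.trans (nbr_drop h'))
        exact Subtype.ext this
      exact congrArg Sum.inr (Subtype.ext (Prod.ext e1 e2))

private lemma drop_inj₂ {u w u' w' : TrimV G} (h : (Trimming G).Adj u w)
    (h' : (Trimming G).Adj u' w') (h1 : trimDrop G u = trimDrop G u')
    (h2 : trimDrop G w = trimDrop G w') : u = u' ∧ w = w' :=
  ⟨drop_inj h h' h1 h2, drop_inj h.symm h'.symm h2 h1⟩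

end TrimmingLemmas
section TrimmingLemmas2

variable {V : Type*} {G : SimpleGraph V}

private lemma lift_arrow {x y : V} (hadj : G.Adj x y) (hx : ¬ IsLeaf G x)
    (hy : ¬ IsLeaf G y) :
    ∃ u w : TrimV G, (Trimming G).Adj u w ∧ trimDrop G u = x ∧ trimDrop G w = y := by
  set x' : ↥{v : V | ¬ IsLeaf G v} := ⟨x, hx⟩ with hx'def
  set y' : ↥{v : V | ¬ IsLeaf G v} := ⟨y, hy⟩ with hy'def
  have hxy : (Gprime G).Adj x' y' := hadj
  have hne : x' ≠ y' := fun h => hadj.ne (congrArg Subtype.val h)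
  by_cases hxK : x' ∈ trimK G <;> by_cases hyK : y' ∈ trimK G
  · refine ⟨Sum.inr ⟨(x', y'), hxK, hxy⟩, Sum.inr ⟨(y', x'), hyK, hxy.symm⟩, ?_, rfl, rfl⟩
    rw [Trimming, Ramification, SimpleGraph.fromRel_adj]
    refine ⟨fun hc => ?_, Or.inl ⟨rfl, rfl, hyK⟩⟩
    exact hne (congrArg Prod.fst (congrArg Subtype.val (Sum.inr.inj hc)))
  · refine ⟨Sum.inr ⟨(x', y'), hxK, hxy⟩, Sum.inl ⟨y', hyK⟩, ?_, rfl, rfl⟩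
    rw [Trimming, Ramification, SimpleGraph.fromRel_adj]
    exact ⟨fun hc => (nomatch hc), Or.inl rfl⟩
  · refine ⟨Sum.inl ⟨x', hxK⟩, Sum.inr ⟨(y', x'), hyK, hxy.symm⟩, ?_, rfl, rfl⟩
    rw [Trimming, Ramification, SimpleGraph.fromRel_adj]
    exact ⟨fun hc => (nomatch hc), Or.inl rfl⟩
  · refine ⟨Sum.inl ⟨x', hxK⟩, Sum.inl ⟨y', hyK⟩, ?_, rfl, rfl⟩
    rw [Trimming, Ramification, SimpleGraph.fromRel_adj]
    exact ⟨fun hc => hne (Subtype.ext_iff.1 (Sum.inl.inj hc)), Or.inl hxy⟩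

private lemma drop_notK {x : {v : ↥{v : V | ¬ IsLeaf G v} // v ∉ trimK G}}
    {u : TrimV G} (h : trimDrop G u = x.val.val) : u = Sum.inl x := by
  cases u with
  | inl x'' => exact congrArg Sum.inl (Subtype.ext (Subtype.ext h))
  | inr a =>
    exfalso
    have : a.val.1 = x.val := Subtype.ext h
    exact x.property (this ▸ a.property.1)

private lemma inr_leaf (a : {p : _ × _ // p.1 ∈ trimK G ∧ (Gprime G).Adj p.1 p.2}) :
    IsLeaf (Trimming G) (Sum.inr a) := by
  have haa : G.Adj a.val.1.val a.val.2.val := a.property.2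
  by_cases h2 : a.val.2 ∈ trimK G
  · have hadj0 : (Trimming G).Adj (Sum.inr a)
        (Sum.inr ⟨(a.val.2, a.val.1), h2, a.property.2.symm⟩) := by
      rw [Trimming, Ramification, SimpleGraph.fromRel_adj]
      refine ⟨fun hc => ?_, Or.inl ⟨rfl, rfl, h2⟩⟩
      have : a.val.1 = a.val.2 := congrArg Prod.fst (congrArg Subtype.val (Sum.inr.inj hc))
      exact haa.ne (congrArg Subtype.val this)
    exact ⟨_, hadj0, fun w hw => drop_inj hw.symm hadj0.symm ((nbr_drop hw).trans rfl) rfl⟩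
  · have hadj0 : (Trimming G).Adj (Sum.inr a) (Sum.inl ⟨a.val.2, h2⟩) := by
      rw [Trimming, Ramification, SimpleGraph.fromRel_adj]
      exact ⟨fun hc => (nomatch hc), Or.inl rfl⟩
    exact ⟨_, hadj0, fun w hw => drop_inj hw.symm hadj0.symm ((nbr_drop hw).trans rfl) rfl⟩

private lemma inl_not_leaf (hiso : ∀ v, ∃ w, G.Adj v w)
    (x : {v : ↥{v : V | ¬ IsLeaf G v} // v ∉ trimK G}) :
    ¬ IsLeaf (Trimming G) (Sum.inl x) := by
  have hv : ¬ IsLeaf G x.val.val := x.val.property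
  obtain ⟨w, hw⟩ := hiso x.val.val
  have : ∃ w', G.Adj x.val.val w' ∧ w' ≠ w := by
    by_contra hc
    push_neg at hc
    exact hv ⟨w, hw, fun z hz => hc z hz⟩
  obtain ⟨w', hw', hne⟩ := this
  have hwi : ¬ IsLeaf G w := fun hl => x.property ⟨w, hl, hw⟩
  have hwi' : ¬ IsLeaf G w' := fun hl => x.property ⟨w', hl, hw'⟩
  obtain ⟨u₁, u₂, hadj, he1, he2⟩ := lift_arrow hw hv hwi
  obtain ⟨u₁', u₂', hadj', he1', he2'⟩ := lift_arrow hw' hv hwi'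
  rw [drop_notK he1] at hadj
  rw [drop_notK he1'] at hadj'
  rintro ⟨z, hz, huniq⟩
  apply hne
  rw [← he2, ← he2', huniq u₂ hadj, huniq u₂' hadj']

end TrimmingLemmas2
private def eInv {V : Type*} (G : SimpleGraph V) (Z : Set (V × V)) :
    Set (TrimV G × TrimV G) :=
  {q | (Trimming G).Adj q.1 q.2 ∧ (trimDrop G q.1, trimDrop G q.2) ∈ Z}

section TrimmingLemmas3

variable {V : Type*} {G : SimpleGraph V}

private lemma eplus_internal {X : Set (TrimV G × TrimV G)} {p : V × V}
    (hp : p ∈ ePlus G X) : ¬ IsLeaf G p.1 ∧ ¬ IsLeaf G p.2 := by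
  obtain ⟨q, -, rfl⟩ := hp
  exact ⟨drop_internal q.1, drop_internal q.2⟩

private lemma einv_eplus {X : Set (TrimV G × TrimV G)}
    (hX : IsDecoration (Trimming G) X) : eInv G (ePlus G X) = X := by
  ext q
  constructor
  · rintro ⟨hadj, p, hp, heq⟩
    have hpa := hX.1 p hp
    have h1 : trimDrop G p.1 = trimDrop G q.1 := congrArg Prod.fst heq
    have h2 : trimDrop G p.2 = trimDrop G q.2 := congrArg Prod.snd heq
    obtain ⟨e1, e2⟩ := drop_inj₂ hpa hadj h1 h2
    rw [← Prod.mk.eta (p := q), ← e1, ← e2, Prod.mk.eta]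
    exact hp
  · intro hq
    exact ⟨hX.1 q hq, q, hq, rfl⟩

private lemma eplus_einv {Z : Set (V × V)}
    (hZ : ∀ p ∈ Z, G.Adj p.1 p.2 ∧ ¬ IsLeaf G p.1 ∧ ¬ IsLeaf G p.2) :
    ePlus G (eInv G Z) = Z := by
  ext p
  constructor
  · rintro ⟨q, ⟨-, hq⟩, rfl⟩
    exact hq
  · intro hp
    obtain ⟨hadj, h1, h2⟩ := hZ p hp
    obtain ⟨u, w, huw, heu, hew⟩ := lift_arrow hadj h1 h2
    refine ⟨(u, w), ⟨huw, ?_⟩, ?_⟩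
    · show (trimDrop G u, trimDrop G w) ∈ Z
      rw [heu, hew]; exact hp
    · show (trimDrop G u, trimDrop G w) = p
      rw [heu, hew]

private lemma sink_transfer {X : Set (TrimV G × TrimV G)}
    (hX : IsDecoration (Trimming G) X)
    (x : {v : ↥{v : V | ¬ IsLeaf G v} // v ∉ trimK G}) :
    IsSink (Trimming G) X (Sum.inl x) ↔ IsSink G (ePlus G X) x.val.val := by
  constructor
  · intro hs v hv
    have hvi : ¬ IsLeaf G v := fun hl => x.property ⟨v, hl, hv.symm⟩
    obtain ⟨u, w, huw, heu, hew⟩ := lift_arrow hv hvi x.val.property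
    rw [drop_notK hew] at huw
    refine ⟨(u, Sum.inl x), hs u huw, ?_⟩
    show (trimDrop G u, trimDrop G (Sum.inl x)) = (v, x.val.val)
    rw [heu]; rfl
  · intro hs u hu
    have hadj : G.Adj (trimDrop G u) x.val.val := trim_adj hu
    obtain ⟨q, hq, heq⟩ := hs _ hadj
    have hqa := hX.1 q hq
    obtain ⟨e1, e2⟩ := drop_inj₂ hqa hu (congrArg Prod.fst heq)
      ((congrArg Prod.snd heq).trans rfl)
    rw [← Prod.mk.eta (p := q), e1, e2] at hq
    exact hq
  
private lemma source_transfer {X : Set (TrimV G × TrimV G)}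
    (hX : IsDecoration (Trimming G) X)
    (x : {v : ↥{v : V | ¬ IsLeaf G v} // v ∉ trimK G}) :
    IsSource (Trimming G) X (Sum.inl x) ↔ IsSource G (ePlus G X) x.val.val := by
  constructor
  · intro hs v hv
    have hvi : ¬ IsLeaf G v := fun hl => x.property ⟨v, hl, hv⟩
    obtain ⟨u, w, huw, heu, hew⟩ := lift_arrow hv.symm hvi x.val.property
    rw [drop_notK hew] at huw
    refine ⟨(Sum.inl x, u), hs u huw.symm, ?_⟩
    show (trimDrop G (Sum.inl x), trimDrop G u) = (x.val.val, v)
    rw [heu]; rfl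
  · intro hs u hu
    have hadj : G.Adj x.val.val (trimDrop G u) := trim_adj hu
    obtain ⟨q, hq, heq⟩ := hs _ hadj
    have hqa := hX.1 q hq
    obtain ⟨e1, e2⟩ := drop_inj₂ hqa hu ((congrArg Prod.fst heq).trans rfl)
      (congrArg Prod.snd heq)
    rw [← Prod.mk.eta (p := q), e1, e2] at hq
    exact hq
  
end TrimmingLemmas3
section TrimmingLemmas4

variable {V : Type*} {G : SimpleGraph V}

private lemma no_sink_source_at_K {X : Set (TrimV G × TrimV G)}
    {v : ↥{v : V | ¬ IsLeaf G v}} (hv : v ∈ trimK G) :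
    ¬ IsSink G (ePlus G X) v.val ∧ ¬ IsSource G (ePlus G X) v.val := by
  obtain ⟨l, hl, hadj⟩ := hv
  constructor
  · intro hs
    exact ((eplus_internal (hs l hadj.symm)).1) hl
  · intro hs
    exact ((eplus_internal (hs l hadj)).2) hl

private lemma no_sink_source_at_leaf {X : Set (TrimV G × TrimV G)} {v : V}
    (hl : IsLeaf G v) :
    ¬ IsSink G (ePlus G X) v ∧ ¬ IsSource G (ePlus G X) v := by
  obtain ⟨w, hw, -⟩ := id hl
  constructor
  · intro hs
    exact ((eplus_internal (hs w hw.symm)).2) hl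
  · intro hs
    exact ((eplus_internal (hs w hw)).1) hl

private lemma dormant_internal {Z : Set (V × V)} (hZ : IsDormant G Z) :
    ∀ p ∈ Z, G.Adj p.1 p.2 ∧ ¬ IsLeaf G p.1 ∧ ¬ IsLeaf G p.2 := by
  intro p hp
  have hadj : G.Adj p.1 p.2 := hZ.1.1.1 p hp
  refine ⟨hadj, ?_, ?_⟩
  · intro hl
    obtain ⟨n, hn, hun⟩ := hl
    refine (hZ.2 p.1).2 (fun w hw => ?_)
    have : w = p.2 := (hun w hw).trans (hun p.2 hadj).symm
    rw [this, Prod.mk.eta]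
    exact hp
  · intro hl
    obtain ⟨n, hn, hun⟩ := hl
    refine (hZ.2 p.2).1 (fun w hw => ?_)
    have : w = p.1 := (hun w hw.symm).trans (hun p.1 hadj.symm).symm
    rw [this, Prod.mk.eta]
    exact hp

private lemma eplus_dormant (hiso : ∀ v, ∃ w, G.Adj v w)
    {X : Set (TrimV G × TrimV G)} (hX : IsState (Trimming G) X) :
    IsDormant G (ePlus G X) := by
  have hdec : IsDecoration G (ePlus G X) := by
    constructor
    · rintro p ⟨q, hq, rfl⟩
      exact trim_adj (hX.1.1 q hq)
    · rintro p ⟨q, hq, rfl⟩ ⟨q', hq', heq⟩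
      have hqa := hX.1.1 q hq
      have hqa' := hX.1.1 q' hq'
      have h1 : trimDrop G q'.1 = trimDrop G q.2 := congrArg Prod.fst heq
      have h2 : trimDrop G q'.2 = trimDrop G q.1 := congrArg Prod.snd heq
      obtain ⟨e1, e2⟩ := drop_inj₂ hqa' hqa.symm h1 h2
      apply hX.1.2 q hq
      have : Prod.swap q = q' := Prod.ext e1.symm e2.symm
      rw [this]
      exact hq'
  have hall : ∀ v, ¬ IsSink G (ePlus G X) v ∧ ¬ IsSource G (ePlus G X) v := by
    intro v
    by_cases hleaf : IsLeaf G v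
    · exact no_sink_source_at_leaf hleaf
    · by_cases hK : (⟨v, hleaf⟩ : ↥{v : V | ¬ IsLeaf G v}) ∈ trimK G
      · exact no_sink_source_at_K hK
      · have hx := hX.2 (Sum.inl ⟨⟨v, hleaf⟩, hK⟩) (inl_not_leaf hiso _)
        exact ⟨fun hs => hx.1 ((sink_transfer hX.1 _).2 hs),
          fun hs => hx.2 ((source_transfer hX.1 _).2 hs)⟩
  exact ⟨⟨hdec, fun v _ => hall v⟩, hall⟩

private lemma einv_state (hiso : ∀ v, ∃ w, G.Adj v w)
    {Z : Set (V × V)} (hZ : IsDormant G Z) :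
    IsState (Trimming G) (eInv G Z) ∧ ePlus G (eInv G Z) = Z := by
  have hZi := dormant_internal hZ
  have hZX : ePlus G (eInv G Z) = Z := eplus_einv hZi
  have hdec : IsDecoration (Trimming G) (eInv G Z) := by
    constructor
    · rintro q ⟨hadj, -⟩
      exact hadj
    · rintro q ⟨hadj, hq⟩ ⟨hadj', hq'⟩
      exact hZ.1.1.2 _ hq hq'
  refine ⟨⟨hdec, ?_⟩, hZX⟩
  intro u hu
  cases u with
  | inr a => exact absurd (inr_leaf a) hu
  | inl x =>
    refine ⟨fun hs => (hZ.2 x.val.val).1 ?_, fun hs => (hZ.2 x.val.val).2 ?_⟩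
    · rw [← hZX]
      exact (sink_transfer hdec x).1 hs
    · rw [← hZX]
      exact (source_transfer hdec x).1 hs

end TrimmingLemmas4
/-- The Game of Arrows on a graph `G` (without isolated vertices) is equivalent to
the Trimmed Game of Arrows on the trimming `T(G)`: the map `e⁺` restricts to a
bijection from the states of `T(G)` to the dormant states of `G`, and this bijection
respects inclusion of states and the follower relation, so the corresponding game
trees are isomorphic. -/
theorem trimming_game_equiv {V : Type*} [Fintype V] (G : SimpleGraph V)
    (hiso : ∀ v, ∃ w, G.Adj v w) :
    Set.BijOn (ePlus G) {X | IsState (Trimming G) X} {Y | IsDormant G Y} ∧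
    (∀ X X' : Set (TrimV G × TrimV G), IsState (Trimming G) X →
      IsState (Trimming G) X' → (X ⊆ X' ↔ ePlus G X ⊆ ePlus G X')) ∧
    (∀ X X' : Set (TrimV G × TrimV G), IsState (Trimming G) X →
      IsState (Trimming G) X' →
      (Follower (Trimming G) X X' ↔ DormantFollower G (ePlus G X) (ePlus G X'))) := by
  have partB : ∀ X X' : Set (TrimV G × TrimV G), IsState (Trimming G) X →
      IsState (Trimming G) X' → (X ⊆ X' ↔ ePlus G X ⊆ ePlus G X') := by
    intro X X' hX hX'
    constructor
    · exact fun h => Set.image_mono h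
    · intro h
      rw [← einv_eplus hX.1, ← einv_eplus hX'.1]
      exact fun q hq => ⟨hq.1, h hq.2⟩
  refine ⟨⟨fun X hX => eplus_dormant hiso hX, ?_, ?_⟩, partB, ?_⟩
  · intro X hX X' hX' h
    rw [← einv_eplus hX.1, ← einv_eplus hX'.1, h]
  · intro Z hZ
    obtain ⟨hstate, heq⟩ := einv_state hiso hZ
    exact ⟨eInv G Z, hstate, heq⟩
  · intro X X' hX hX'
    constructor
    · rintro ⟨-, -, p, hp, rfl⟩
      have hpa : (Trimming G).Adj p.1 p.2 := hX'.1.1 p (Set.mem_insert p X)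
      refine ⟨eplus_dormant hiso hX, eplus_dormant hiso hX',
        (trimDrop G p.1, trimDrop G p.2), ?_, ?_⟩
      · rintro ⟨q, hq, heq⟩
        have hqa := hX.1.1 q hq
        obtain ⟨e1, e2⟩ := drop_inj₂ hqa hpa (congrArg Prod.fst heq) (congrArg Prod.snd heq)
        apply hp
        rw [← Prod.mk.eta (p := p), ← e1, ← e2, Prod.mk.eta]
        exact hq
      · exact Set.image_insert_eq
    · rintro ⟨hD, hD', q, hq, heq⟩
      have hsub : X ⊆ X' := (partB X X' hX hX').2 (by
        rw [heq]; exact Set.subset_insert _ _)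
      have hqmem : q ∈ ePlus G X' := by rw [heq]; exact Set.mem_insert _ _
      obtain ⟨p, hpX', hep⟩ := hqmem
      have hpX : p ∉ X := fun hc => hq (by rw [← hep]; exact ⟨p, hc, rfl⟩)
      refine ⟨hX, hX', p, hpX, ?_⟩
      apply Set.Subset.antisymm
      · intro r hr
        have hra := hX'.1.1 r hr
        have hmem : (trimDrop G r.1, trimDrop G r.2) ∈ insert q (ePlus G X) := by
          rw [← heq]; exact ⟨r, hr, rfl⟩
        rcases Set.mem_insert_iff.1 hmem with hcase | hcase
        · have hpa := hX'.1.1 p hpX'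
          have hrp := hcase.trans hep.symm
          obtain ⟨e1, e2⟩ := drop_inj₂ hra hpa (congrArg Prod.fst hrp)
            (congrArg Prod.snd hrp)
          have : r = p := Prod.ext e1 e2
          rw [this]
          exact Set.mem_insert _ _
        · obtain ⟨r', hr', her⟩ := hcase
          have hra' := hX.1.1 r' hr'
          obtain ⟨e1, e2⟩ := drop_inj₂ hra' hra (congrArg Prod.fst her)
            (congrArg Prod.snd her)
          have : r = r' := (Prod.ext e1 e2).symm
          rw [this]
          exact Set.mem_insert_of_mem _ hr'
      · exact Set.insert_subset_iff.2 ⟨hpX', hsub⟩
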